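/- arXiv:2010.07294 — 7 statements merged into one kernel-verified Lean document; each statement's English description precedes it below -/
import Mathlib

section
/- For all m ≥ 3 and all real numbers d with 0 < d < (m-2)/(m·log₂ 3): if y ≥ m·2^m and S_m(y) < m·d, then T^m(y) < y/2. -/
open Filter

/-- The (accelerated) Collatz map. -/
def T (n : ℕ) : ℕ := if n % 2 = 0 then n / 2 else (3 * n + 1) / 2

/-- Parity of the k-th iterate. -/
def X (k y : ℕ) : ℕ := T^[k] y % 2

/-- S_m(y) = X_0(y) + ... + X_m(y). -/
def S (m y : ℕ) : ℕ := ∑ k ∈ Finset.range (m + 1), X k y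

/-- Upper natural density. -/
noncomputable def ud (A : Set ℕ) : ℝ :=
  Filter.limsup (fun n => ((A ∩ Set.Iic n).ncard : ℝ) / n) Filter.atTop

/-- Positive upper density preserving. -/
def PDP (H : Set ℕ → Set ℕ) : Prop := ∀ A : Set ℕ, 0 < ud A → 0 < ud (H A)

/-- H_f for real-valued f. -/
def Hf (f : ℕ → ℝ) (A : Set ℕ) : Set ℕ :=
  {m | ∃ n ∈ A, ∃ k : ℕ, T^[k] n = m ∧ (m : ℝ) < f n}

/-- H_f for ℕ-valued f. -/
def HfN (f : ℕ → ℕ) (A : Set ℕ) : Set ℕ :=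
  {m | ∃ n ∈ A, ∃ k : ℕ, T^[k] n = m ∧ m < f n}

/-- S has natural density one. -/
def DensityOne (A : Set ℕ) : Prop :=
  Filter.Tendsto (fun n => ((A ∩ Set.Iic n).ncard : ℝ) / n) Filter.atTop (nhds 1)

private lemma Tstep (n : ℕ) : 2 * T n = 3 ^ (n % 2) * n + n % 2 := by
  rcases Nat.mod_two_eq_zero_or_one n with h | h <;> simp [T, h] <;> omega

lemma key (y : ℕ) : ∀ k, 2 ^ k * T^[k] y ≤ 3 ^ (∑ j ∈ Finset.range k, X j y) * (y + (2 ^ k - 1))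
  | 0 => by simp
  | (k+1) => by
    have ih := key y k
    have h2 : 2 * T (T^[k] y) = 3 ^ (X k y) * T^[k] y + X k y := Tstep _
    have hxle : X k y ≤ 1 := by unfold X; omega
    have hsplit : 2 ^ (k+1) - 1 = (2 ^ k - 1) + 2 ^ k := by
      have h1 : (1:ℕ) ≤ 2 ^ k := Nat.one_le_two_pow
      have h2 : 2 ^ (k+1) = 2 * 2 ^ k := by ring
      omega
    rw [Function.iterate_succ_apply', Finset.sum_range_succ, hsplit]
    have h3 : (1:ℕ) ≤ 3 ^ (∑ j ∈ Finset.range k, X j y) * 3 ^ (X k y) :=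
      Nat.one_le_iff_ne_zero.mpr (by positivity)
    calc 2 ^ (k+1) * T (T^[k] y) = 2 ^ k * (2 * T (T^[k] y)) := by ring
    _ = 3 ^ (X k y) * (2 ^ k * T^[k] y) + 2 ^ k * X k y := by rw [h2]; ring
    _ ≤ 3 ^ (X k y) * (3 ^ (∑ j ∈ Finset.range k, X j y) * (y + (2 ^ k - 1)))
        + 2 ^ k * 1 := by gcongr
    _ ≤ 3 ^ (∑ j ∈ Finset.range k, X j y + X k y) * (y + ((2 ^ k - 1) + 2 ^ k)) := by
        rw [pow_add]
        nlinarith [ih, h3, Nat.mul_le_mul_right (2 ^ k) h3]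


theorem stmt3 (m : ℕ) (hm : 3 ≤ m) (d : ℝ) (hd : 0 < d)
    (hd' : d < ((m : ℝ) - 2) / (m * Real.logb 2 3))
    (y : ℕ) (hy : m * 2 ^ m ≤ y) (hS : (S m y : ℝ) < m * d) :
    (T^[m] y : ℝ) < (y : ℝ) / 2 := by
  set s := ∑ j ∈ Finset.range m, X j y with hsdef
  have hkey := key y m
  have hsS : s ≤ ∑ k ∈ Finset.range (m+1), X k y := by
    rw [Finset.sum_range_succ]; omega
  have hL : (0:ℝ) < Real.logb 2 3 := Real.logb_pos (by norm_num) (by norm_num)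
  have hm0 : (0:ℝ) < m := by positivity
  have hm3 : (3:ℝ) ≤ m := by exact_mod_cast hm
  have h4 : (m:ℝ) * (((m:ℝ)-2) / ((m:ℝ) * Real.logb 2 3)) = ((m:ℝ)-2) / Real.logb 2 3 := by
    field_simp
  have h5 : (s:ℝ) < ((m:ℝ)-2)/Real.logb 2 3 := by
    have h1 : (s:ℝ) ≤ ((S m y : ℕ) : ℝ) := by exact_mod_cast hsS
    have h3 : (m:ℝ) * d < (m:ℝ) * (((m:ℝ)-2) / ((m:ℝ) * Real.logb 2 3)) :=
      mul_lt_mul_of_pos_left hd' hm0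
    linarith
  have hsd : (s:ℝ) * Real.logb 2 3 < (m:ℝ) - 2 := by
    have := mul_lt_mul_of_pos_right h5 hL
    rwa [div_mul_cancel₀] at this
    exact ne_of_gt hL
  have hpow : ((3:ℝ))^s < (2:ℝ)^(m-2 : ℕ) := by
    have h23 : (2:ℝ) ^ (Real.logb 2 3) = 3 := Real.rpow_logb (by norm_num) (by norm_num) (by norm_num)
    have e1 : ((3:ℝ))^s = (2:ℝ) ^ (Real.logb 2 3 * s) := by
      rw [← Real.rpow_natCast (3:ℝ) s, Real.rpow_mul (by norm_num : (0:ℝ) ≤ 2), h23]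
    have e2 : ((2:ℝ))^(m-2:ℕ) = (2:ℝ) ^ ((m:ℝ) - 2) := by
      rw [← Real.rpow_natCast (2:ℝ) (m-2), Nat.cast_sub (by omega)]
      norm_num
    rw [e1, e2]
    exact Real.rpow_lt_rpow_of_exponent_lt (by norm_num) (by linarith [hsd, mul_comm (s:ℝ) (Real.logb 2 3)])
  set P := ((3:ℝ))^s with hP
  set A := ((T^[m] y : ℕ) : ℝ) with hA
  set Q := ((2:ℝ))^m with hQ
  have hQ0 : (0:ℝ) < Q := by positivity
  have hP0 : (0:ℝ) < P := by positivity
  have hA0 : (0:ℝ) ≤ A := by positivity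
  have h2 : 4 * P < Q := by
    have hmm : m = m - 2 + 2 := by omega
    have : Q = 4 * (2:ℝ)^(m-2:ℕ) := by
      rw [hQ]
      calc (2:ℝ)^m = (2:ℝ)^(m-2+2) := by rw [← hmm]
      _ = 4 * 2^(m-2) := by ring
    rw [this]; linarith
  have h1 : Q * A ≤ P * ((y:ℝ) + Q) := by
    have hcast : ((2^m * T^[m] y : ℕ) : ℝ) ≤ ((3^s * (y + (2^m - 1)) : ℕ) : ℝ) := by
      exact_mod_cast hkey
    push_cast at hcast
    have hle : ((y + (2^m - 1) : ℕ) : ℝ) ≤ (y:ℝ) + Q := by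
      push_cast [hQ]
      have : ((2^m - 1 : ℕ):ℝ) ≤ (2:ℝ)^m := by
        have : (2^m - 1 : ℕ) ≤ 2^m := Nat.sub_le _ _
        calc ((2^m - 1 : ℕ):ℝ) ≤ ((2^m : ℕ):ℝ) := by exact_mod_cast this
        _ = (2:ℝ)^m := by push_cast; ring
      push_cast at this ⊢
      linarith
    calc Q * A = ((2^m * T^[m] y : ℕ) : ℝ) := by push_cast [hQ, hA]; ring
    _ ≤ ((3^s * (y + (2^m - 1)) : ℕ) : ℝ) := by exact_mod_cast hkey
    _ = P * ((y + (2^m - 1) : ℕ) : ℝ) := by push_cast [hP]; ring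
    _ ≤ P * ((y:ℝ) + Q) := by gcongr
  have h3 : (m:ℝ) * Q ≤ (y:ℝ) := by
    calc (m:ℝ) * Q = ((m * 2^m : ℕ) : ℝ) := by push_cast [hQ]; ring
    _ ≤ (y:ℝ) := by exact_mod_cast hy
  have hy0 : (0:ℝ) < y := lt_of_lt_of_le (mul_pos hm0 hQ0) h3
  have h3' : 3 * Q ≤ (y:ℝ) := by
    nlinarith [mul_nonneg (by linarith : (0:ℝ) ≤ (m:ℝ)-3) (le_of_lt hQ0)]
  have hmain : Q * A < Q * ((y:ℝ)/2) := by
    nlinarith [mul_le_mul_of_nonneg_left h3' (le_of_lt hP0),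
      mul_lt_mul_of_pos_right h2 hy0]
  have := lt_of_mul_lt_mul_left hmain (le_of_lt hQ0)
  exact this
end

section
/- The map T is positive upper density preserving: for any A ⊆ ℕ with positive upper density, the image T(A) = {T(n) : n ∈ A} has positive upper density; more precisely, d̄(T(A)) ≥ d̄(A)/3. -/
open Filter

/-- T is at most 2-to-1 and maps [0,n] into [0,(3n+1)/2]. -/
lemma count_key (A : Set ℕ) (n : ℕ) :
    (A ∩ Set.Iic n).ncard ≤ 2 * ((T '' A ∩ Set.Iic ((3*n+1)/2)).ncard) := by
  set M := (3*n+1)/2 with hM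
  have hfin : (T '' A ∩ Set.Iic M).Finite := (Set.finite_Iic M).inter_of_right _
  have hfinS : (A ∩ Set.Iic n).Finite := (Set.finite_Iic n).inter_of_right _
  set Se := {x ∈ A ∩ Set.Iic n | x % 2 = 0} with hSe
  set So := {x ∈ A ∩ Set.Iic n | x % 2 = 1} with hSo
  have hunion : A ∩ Set.Iic n = Se ∪ So := by
    ext x; simp only [hSe, hSo, Set.mem_union, Set.mem_setOf_eq]
    constructor
    · intro h
      by_cases hx : x % 2 = 0
      · exact Or.inl ⟨h, hx⟩
      · exact Or.inr ⟨h, by omega⟩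
    · rintro (h | h) <;> exact h.1
  have hinjE : Set.InjOn T Se := by
    intro x hx y hy h
    have hx2 : x % 2 = 0 := hx.2
    have hy2 : y % 2 = 0 := hy.2
    simp only [T, if_pos hx2, if_pos hy2] at h
    omega
  have hinjO : Set.InjOn T So := by
    intro x hx y hy h
    have hx2 : x % 2 = 1 := hx.2
    have hy2 : y % 2 = 1 := hy.2
    rw [show T x = (3*x+1)/2 by simp [T, hx2], show T y = (3*y+1)/2 by simp [T, hy2]] at h
    omega
  have hsubE : T '' Se ⊆ T '' A ∩ Set.Iic M := by
    rintro _ ⟨x, hx, rfl⟩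
    obtain ⟨⟨hxA, hxn⟩, hxp⟩ := hx
    have hxn' : x ≤ n := hxn
    refine ⟨⟨x, hxA, rfl⟩, ?_⟩
    simp only [Set.mem_Iic]
    rw [show T x = x/2 by simp [T, hxp]]
    omega
  have hsubO : T '' So ⊆ T '' A ∩ Set.Iic M := by
    rintro _ ⟨x, hx, rfl⟩
    obtain ⟨⟨hxA, hxn⟩, hxp⟩ := hx
    have hxn' : x ≤ n := hxn
    refine ⟨⟨x, hxA, rfl⟩, ?_⟩
    simp only [Set.mem_Iic]
    rw [show T x = (3*x+1)/2 by simp [T, hxp]]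
    omega
  calc (A ∩ Set.Iic n).ncard = (Se ∪ So).ncard := by rw [hunion]
    _ ≤ Se.ncard + So.ncard := Set.ncard_union_le _ _
    _ = (T '' Se).ncard + (T '' So).ncard := by
        rw [Set.ncard_image_of_injOn hinjE, Set.ncard_image_of_injOn hinjO]
    _ ≤ (T '' A ∩ Set.Iic M).ncard + (T '' A ∩ Set.Iic M).ncard :=
        add_le_add (Set.ncard_le_ncard hsubE hfin) (Set.ncard_le_ncard hsubO hfin)
    _ = 2 * (T '' A ∩ Set.Iic M).ncard := by ring

theorem stmt5 (A : Set ℕ) (hA : 0 < ud A) :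
    0 < ud (T '' A) ∧ ud A / 3 ≤ ud (T '' A) := by
  have key : ud A / 3 ≤ ud (T '' A) := by
    set L := ud A with hLdef
    set g : ℕ → ℝ := fun m => (((T '' A) ∩ Set.Iic m).ncard : ℝ) / m with hgdef
    set f : ℕ → ℝ := fun n => ((A ∩ Set.Iic n).ncard : ℝ) / n with hfdef
    have hudg : ud (T '' A) = limsup g atTop := rfl
    have hudf : limsup f atTop = L := rfl
    have hLpos : (0:ℝ) < L := hA
    -- g bounded above by 2
    have hgA : ∀ m : ℕ, g m ≤ 2 := by
      intro m
      rcases Nat.eq_zero_or_pos m with rfl | hm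
      · simp [hgdef]
      · have h1 : ((T '' A) ∩ Set.Iic m).ncard ≤ m + 1 := by
          have h2 : (Set.Iic m).ncard = m + 1 := by
            rw [← Finset.coe_Iic, Set.ncard_coe_finset, Nat.card_Iic]
          rw [← h2]
          exact Set.ncard_le_ncard Set.inter_subset_right (Set.finite_Iic m)
        have h1' : ((((T '' A) ∩ Set.Iic m).ncard : ℝ)) ≤ (m:ℝ) + 1 := by exact_mod_cast h1
        have hm' : (1:ℝ) ≤ (m:ℝ) := by exact_mod_cast hm
        simp only [hgdef]
        rw [div_le_iff₀ (by linarith)]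
        linarith
    have hbdd : IsBoundedUnder (· ≤ ·) atTop g := isBoundedUnder_of ⟨2, hgA⟩
    have hco : IsCoboundedUnder (· ≤ ·) atTop f :=
      IsBoundedUnder.isCoboundedUnder_le
        (isBoundedUnder_of ⟨0, fun n => by positivity⟩)
    rw [hudg]
    refine le_of_forall_pos_le_add fun ε hε => ?_
    have hL3 : L / 3 - ε ≤ limsup g atTop := by
      set δ : ℝ := min ε L with hδdef
      have hδpos : 0 < δ := lt_min hε hLpos
      set δ' : ℝ := 2*ε/(3*(L+1)) with hδ'def
      have hδ'pos : 0 < δ' := by positivity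
      have hfr : ∃ᶠ n in atTop, L - δ < f n :=
        frequently_lt_of_lt_limsup hco (by rw [hudf]; linarith)
      have hev : ∀ᶠ n : ℕ in atTop, 1 ≤ n ∧ (1/3 - δ' : ℝ) ≤ (n:ℝ)/(3*(n:ℝ)+1) := by
        filter_upwards [eventually_ge_atTop (⌈1/(9*δ')⌉₊ + 1)] with n hn
        have hn1 : 1 ≤ n := by omega
        refine ⟨hn1, ?_⟩
        have hnr : 1/(9*δ') ≤ (n:ℝ) :=
          (Nat.le_ceil _).trans (Nat.cast_le.mpr (by omega))
        have h9 : 1 ≤ (n:ℝ) * (9*δ') := by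
          rw [div_le_iff₀ (by positivity)] at hnr; linarith
        have hn0 : (0:ℝ) < 3*(n:ℝ)+1 := by positivity
        rw [le_div_iff₀ hn0]
        nlinarith [hδ'pos]
      have hfr2 : ∃ᶠ n in atTop, L/3 - ε ≤ g ((3*n+1)/2) := by
        refine (hfr.and_eventually hev).mono ?_
        rintro n ⟨hfn, hn1, hx⟩
        have hn1' : (1:ℝ) ≤ (n:ℝ) := by exact_mod_cast hn1
        have hMpos : (0:ℝ) < (((3*n+1)/2 : ℕ) : ℝ) := by
          have : (0:ℕ) < (3*n+1)/2 := by omega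
          exact_mod_cast this
        have hMle : (((3*n+1)/2 : ℕ) : ℝ) ≤ (3*(n:ℝ)+1)/2 := by
          calc (((3*n+1)/2 : ℕ) : ℝ) ≤ ((3*n+1 : ℕ):ℝ)/((2:ℕ):ℝ) := Nat.cast_div_le
            _ = (3*(n:ℝ)+1)/2 := by push_cast; ring
        have hcountR : ((A ∩ Set.Iic n).ncard : ℝ)
            ≤ 2 * (((T '' A ∩ Set.Iic ((3*n+1)/2)).ncard : ℝ)) := by
          exact_mod_cast count_key A n
        set c : ℝ := ((T '' A ∩ Set.Iic ((3*n+1)/2)).ncard : ℝ) with hc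
        set a : ℝ := ((A ∩ Set.Iic n).ncard : ℝ) with ha
        have hc0 : (0:ℝ) ≤ c := by positivity
        have ha0 : (0:ℝ) ≤ a := by positivity
        have hg1 : g ((3*n+1)/2) = c / (((3*n+1)/2 : ℕ) : ℝ) := rfl
        have hn30 : (0:ℝ) < 3*(n:ℝ)+1 := by positivity
        have step1 : a / (3*(n:ℝ)+1) ≤ c / (((3*n+1)/2 : ℕ) : ℝ) := by
          rw [div_le_div_iff₀ hn30 hMpos]
          nlinarith [mul_le_mul_of_nonneg_right hcountR hMpos.le,
            mul_le_mul_of_nonneg_left hMle hc0]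
        have step2 : f n * ((n:ℝ)/(3*(n:ℝ)+1)) = a / (3*(n:ℝ)+1) := by
          have hn0 : (n:ℝ) ≠ 0 := by positivity
          simp only [hfdef]
          field_simp
          rfl
        have hx0 : (0:ℝ) ≤ (n:ℝ)/(3*(n:ℝ)+1) := by positivity
        have step3 : (L - δ) * ((n:ℝ)/(3*(n:ℝ)+1)) ≤ f n * ((n:ℝ)/(3*(n:ℝ)+1)) :=
          mul_le_mul_of_nonneg_right hfn.le hx0
        have hLδ : (0:ℝ) ≤ L - δ := by
          have := min_le_right ε L; simp only [hδdef]; linarith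
        have step4 : (L - δ) * (1/3 - δ') ≤ (L - δ) * ((n:ℝ)/(3*(n:ℝ)+1)) :=
          mul_le_mul_of_nonneg_left hx hLδ
        have step5 : L/3 - ε ≤ (L - δ) * (1/3 - δ') := by
          have h1 : δ' * (3*(L+1)) = 2*ε := by
            rw [hδ'def]; field_simp
          have h2 : (0:ℝ) ≤ δ * δ' := mul_nonneg hδpos.le hδ'pos.le
          have h3 : δ ≤ ε := min_le_left ε L
          nlinarith [hδ'pos.le]
        rw [hg1]
        linarith [step1, step3, step4, step5, step2.ge, step2.le]
      have hMt : Tendsto (fun n : ℕ => (3*n+1)/2) atTop atTop :=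
        tendsto_atTop_mono (fun n => by simp only [id_eq]; omega) tendsto_id
      exact le_limsup_of_frequently_le (hMt.frequently hfr2) hbdd
    linarith
  exact ⟨lt_of_lt_of_le (by linarith) key, key⟩
end

section
/- For all increasing functions f, g : ℕ → ℝ mapping ℕ into ℕ (so compositions make sense) and all A ⊆ ℕ, we have (H_f ∘ H_g)(A) ⊆ H_{f∘g}(A). -/
open Filter

theorem stmt9 (f g : ℕ → ℕ) (hf : Monotone f) (hg : Monotone g) (A : Set ℕ) :
    HfN f (HfN g A) ⊆ HfN (f ∘ g) A := by
  rintro m ⟨n', ⟨n, hn, j, hj, hlt⟩, k, hk, hmk⟩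
  exact ⟨n, hn, k + j, by rw [Function.iterate_add_apply, hj, hk],
    lt_of_lt_of_le hmk (hf hlt.le)⟩
end

section
/- If H_f is positive upper density preserving, then the set M_f = {y ∈ ℕ : ∃ k, T^k(y) < f(y)} has natural density 1. -/
open Filter

theorem stmt11 (f : ℕ → ℝ) (hf : PDP (Hf f)) :
    DensityOne {y : ℕ | ∃ k : ℕ, (T^[k] y : ℝ) < f y} := by
  set M : Set ℕ := {y : ℕ | ∃ k : ℕ, (T^[k] y : ℝ) < f y} with hM
  -- H_f of the complement is empty
  have hempty : Hf f Mᶜ = ∅ := by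
    ext m
    simp only [Hf, Set.mem_setOf_eq, Set.mem_empty_iff_false, iff_false]
    rintro ⟨n, hn, k, hk, hlt⟩
    exact hn ⟨k, by rw [hk]; exact hlt⟩
  have hud0 : ud (Hf f Mᶜ) = 0 := by
    rw [hempty]
    have h0 : (fun n : ℕ => (((∅ : Set ℕ) ∩ Set.Iic n).ncard : ℝ) / n) = fun _ => (0 : ℝ) := by
      funext n; simp
    rw [ud, h0, limsup_const]
  have hle : ud Mᶜ ≤ 0 := by
    by_contra h
    push_neg at h
    have := hf Mᶜ h
    rw [hud0] at this
    exact lt_irrefl _ this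
  set c : ℕ → ℝ := fun n => (((Mᶜ : Set ℕ) ∩ Set.Iic n).ncard : ℝ) / n with hc
  have hc0 : ∀ n, 0 ≤ c n := fun n => by positivity
  have hIic : ∀ n : ℕ, (Set.Iic n).ncard = n + 1 := fun n => by
    rw [← Finset.coe_Iic, Set.ncard_coe_finset, Nat.card_Iic]
  have hcbound : ∀ n, c n ≤ 2 := by
    intro n
    rcases Nat.eq_zero_or_pos n with h0 | h1
    · simp [hc, h0]
    · have hsub : ((Mᶜ : Set ℕ) ∩ Set.Iic n).ncard ≤ n + 1 := by
        rw [← hIic n]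
        exact Set.ncard_le_ncard Set.inter_subset_right (Set.finite_Iic n)
      have hn : (0 : ℝ) < n := by exact_mod_cast h1
      rw [hc, div_le_iff₀ hn]
      calc (((Mᶜ : Set ℕ) ∩ Set.Iic n).ncard : ℝ) ≤ (n : ℝ) + 1 := by exact_mod_cast hsub
        _ ≤ 2 * n := by
          have : (1 : ℝ) ≤ n := by exact_mod_cast h1
          linarith
  have hbdd : IsBoundedUnder (· ≤ ·) atTop c := Filter.isBoundedUnder_of ⟨2, hcbound⟩
  have hctend : Tendsto c atTop (nhds 0) := by
    rw [Metric.tendsto_atTop]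
    intro ε hε
    have hev : ∀ᶠ n in atTop, c n < ε :=
      eventually_lt_of_limsup_lt (lt_of_le_of_lt hle hε) hbdd
    obtain ⟨N, hN⟩ := Filter.eventually_atTop.mp hev
    exact ⟨N, fun n hn => by
      rw [Real.dist_eq, sub_zero, abs_of_nonneg (hc0 n)]
      exact hN n hn⟩
  -- the counting identity
  have hcard : ∀ n : ℕ, ((M ∩ Set.Iic n).ncard : ℝ) =
      ((n : ℝ) + 1) - ((Mᶜ ∩ Set.Iic n).ncard : ℝ) := by
    intro n
    have hfin : (Set.Iic n).Finite := Set.finite_Iic n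
    have hdisj : Disjoint (M ∩ Set.Iic n) (Mᶜ ∩ Set.Iic n) :=
      Disjoint.mono Set.inter_subset_left Set.inter_subset_left disjoint_compl_right
    have hunion : (M ∩ Set.Iic n) ∪ (Mᶜ ∩ Set.Iic n) = Set.Iic n := by
      rw [← Set.union_inter_distrib_right, Set.union_compl_self, Set.univ_inter]
    have hsum := Set.ncard_union_eq hdisj (hfin.subset Set.inter_subset_right)
      (hfin.subset Set.inter_subset_right)
    rw [hunion, hIic n] at hsum
    have : ((M ∩ Set.Iic n).ncard : ℝ) + ((Mᶜ ∩ Set.Iic n).ncard : ℝ) = (n : ℝ) + 1 := by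
      exact_mod_cast hsum.symm
    linarith
  have h1 : Tendsto (fun n : ℕ => ((n : ℝ) + 1) / n) atTop (nhds 1) := by
    have h2 : Tendsto (fun n : ℕ => 1 + (n : ℝ)⁻¹) atTop (nhds (1 + 0)) :=
      tendsto_const_nhds.add (tendsto_inv_atTop_zero.comp tendsto_natCast_atTop_atTop)
    rw [add_zero] at h2
    refine h2.congr' ?_
    filter_upwards [Filter.eventually_gt_atTop 0] with n hn
    have hn' : (n : ℝ) ≠ 0 := by positivity
    field_simp
  have hfinal : Tendsto (fun n : ℕ => ((n : ℝ) + 1) / n - c n) atTop (nhds 1) := by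
    have := h1.sub hctend
    rwa [sub_zero] at this
  show Tendsto (fun n => ((M ∩ Set.Iic n).ncard : ℝ) / n) atTop (nhds 1)
  refine hfinal.congr (fun n => ?_)
  rw [hcard n, sub_div]
end

section
/- The map H_f with f(y) = y/2 is positive upper density preserving: for every A ⊆ ℕ with d̄(A) > 0, the set H_f(A) = {T^k(n) : n ∈ A, T^k(n) < n/2} has positive upper density. -/
open Filter

/-! ### Auxiliary development -/

/-- partial parity sum over `k < M`. -/
def Sp (M n : ℕ) : ℕ := ∑ k ∈ Finset.range M, X k n

lemma X_succ (k y : ℕ) : X (k+1) y = X k (T y) := by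
  simp [X, Function.iterate_succ_apply]

lemma X_zero (y : ℕ) : X 0 y = y % 2 := rfl

lemma Sp_zero (y : ℕ) : Sp 0 y = 0 := rfl

lemma T_even {n : ℕ} (h : n % 2 = 0) : T n = n / 2 := by simp [T, h]
lemma T_odd {n : ℕ} (h : n % 2 = 1) : T n = (3*n+1) / 2 := by simp [T, h]

lemma two_T_le (n : ℕ) : 2 * T n ≤ 3 ^ (X 0 n) * n + 1 := by
  rcases Nat.even_or_odd n with he | ho
  · have h : n % 2 = 0 := Nat.even_iff.mp he
    simp only [T_even h, X, Function.iterate_zero, id_eq, h, pow_zero, one_mul]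
    omega
  · have h : n % 2 = 1 := Nat.odd_iff.mp ho
    simp only [T_odd h, X, Function.iterate_zero, id_eq, h, pow_one]
    omega

lemma T_mod (k : ℕ) {a b : ℕ} (h : a ≡ b [MOD 2^(k+1)]) : T a ≡ T b [MOD 2^k] := by
  have hd : (2:ℕ) ∣ 2^(k+1) := dvd_pow_self 2 (Nat.succ_ne_zero k)
  have hpar : a % 2 = b % 2 := Nat.ModEq.of_dvd hd h
  have key : ∀ c : ℕ, c / 2 % 2^k = c % 2^(k+1) / 2 := by
    intro c
    rw [← Nat.mod_mul_right_div_self, pow_succ']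
  rcases Nat.even_or_odd a with he | ho
  · have ha : a % 2 = 0 := Nat.even_iff.mp he
    have hb : b % 2 = 0 := by omega
    show T a % 2^k = T b % 2^k
    rw [T_even ha, T_even hb, key, key, h]
  · have ha : a % 2 = 1 := Nat.odd_iff.mp ho
    have hb : b % 2 = 1 := by omega
    have h3 : 3*a+1 ≡ 3*b+1 [MOD 2^(k+1)] := (h.mul_left 3).add_right 1
    show T a % 2^k = T b % 2^k
    rw [T_odd ha, T_odd hb, key, key, h3]

lemma X_mod : ∀ (k : ℕ) {a b : ℕ}, a ≡ b [MOD 2^(k+1)] → X k a = X k b := by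
  intro k
  induction k with
  | zero => intro a b h; simpa [X, Nat.ModEq] using Nat.ModEq.of_dvd (by norm_num) h
  | succ k ih =>
    intro a b h
    rw [X_succ, X_succ]
    exact ih (T_mod (k+1) h)

lemma Sp_mod (M : ℕ) {a b : ℕ} (h : a ≡ b [MOD 2^M]) : Sp M a = Sp M b := by
  unfold Sp
  apply Finset.sum_congr rfl
  intro k hk
  have hk' : k + 1 ≤ M := Finset.mem_range.mp hk
  exact X_mod k (Nat.ModEq.of_dvd (pow_dvd_pow 2 hk') h)

lemma X_le_one (k y : ℕ) : X k y ≤ 1 := by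
  have := Nat.mod_lt (T^[k] y) (by norm_num : (0:ℕ) < 2)
  simpa [X] using Nat.lt_succ_iff.mp this

lemma Sp_le (M n : ℕ) : Sp M n ≤ M := by
  calc Sp M n ≤ ∑ _k ∈ Finset.range M, 1 := Finset.sum_le_sum (fun k _ => X_le_one k n)
  _ = M := by simp

lemma Sp_succ' (M y : ℕ) : Sp (M+1) y = Sp M (T y) + X 0 y := by
  unfold Sp
  rw [Finset.sum_range_succ' (fun k => X k y) M]
  simp only [X_succ]

lemma T_two_mul (z : ℕ) : T (2*z) = z := by
  have : (2*z) % 2 = 0 := by omega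
  rw [T_even this]; omega

lemma T_two_mul_add_one (z : ℕ) : T (2*z+1) = 3*z+2 := by
  have : (2*z+1) % 2 = 1 := by omega
  rw [T_odd this]; omega

lemma growth (M : ℕ) : ∀ n, 2^M * T^[M] n ≤ 3 ^ (Sp M n) * n + 4^M := by
  induction M with
  | zero => intro n; simp [Sp]
  | succ M ih =>
    intro n
    have h1 : 2^(M+1) * T^[M+1] n = 2 * (2^M * T^[M] (T n)) := by
      rw [Function.iterate_succ_apply]; ring
    have h2 : 2 * (2^M * T^[M] (T n)) ≤ 2 * (3 ^ (Sp M (T n)) * T n + 4^M) :=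
      Nat.mul_le_mul_left 2 (ih (T n))
    have h3 : 2 * (3 ^ (Sp M (T n)) * T n + 4^M) = 3 ^ (Sp M (T n)) * (2 * T n) + 2 * 4^M := by
      ring
    have h4 : 3 ^ (Sp M (T n)) * (2 * T n) ≤ 3 ^ (Sp M (T n)) * (3 ^ (X 0 n) * n + 1) :=
      Nat.mul_le_mul_left _ (two_T_le n)
    have h5 : 3 ^ (Sp M (T n)) * (3 ^ (X 0 n) * n + 1) = 3 ^ (Sp (M+1) n) * n + 3 ^ (Sp M (T n)) := by
      rw [Sp_succ', pow_add]; ring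
    have h6 : 3 ^ (Sp M (T n)) ≤ 3^M := Nat.pow_le_pow_right (by norm_num) (Sp_le M (T n))
    have h7 : (3:ℕ)^M ≤ 4^M := Nat.pow_le_pow_left (by norm_num) M
    calc 2^(M+1) * T^[M+1] n = 2 * (2^M * T^[M] (T n)) := h1
      _ ≤ 3 ^ (Sp M (T n)) * (2 * T n) + 2 * 4^M := by omega
      _ ≤ 3 ^ (Sp (M+1) n) * n + 3 ^ (Sp M (T n)) + 2 * 4^M := by omega
      _ ≤ 3 ^ (Sp (M+1) n) * n + 4^(M+1) := by
          have : (4:ℕ)^(M+1) = 4 * 4^M := by ring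
          omega

lemma sum_range_two_mul {β : Type*} [AddCommMonoid β] (n : ℕ) (f : ℕ → β) :
    ∑ y ∈ Finset.range (2*n), f y = ∑ z ∈ Finset.range n, (f (2*z) + f (2*z+1)) := by
  induction n with
  | zero => simp
  | succ n ih =>
    have h : 2*(n+1) = (2*n) + 1 + 1 := by ring
    rw [h, Finset.sum_range_succ, Finset.sum_range_succ, ih, Finset.sum_range_succ]
    rw [add_assoc]

lemma Sp_even (M z : ℕ) : Sp (M+1) (2*z) = Sp M z := by
  rw [Sp_succ', T_two_mul, X_zero]; omega

lemma Sp_odd (M z : ℕ) : Sp (M+1) (2*z+1) = Sp M (3*z+2) + 1 := by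
  rw [Sp_succ', T_two_mul_add_one, X_zero]; omega

lemma sum_aff (M : ℕ) (g : ℕ → ℤ) :
    ∑ z ∈ Finset.range (2^M), g (Sp M (3*z+2)) = ∑ y ∈ Finset.range (2^M), g (Sp M y) := by
  have hrw : ∀ z, Sp M (3*z+2) = Sp M ((3*z+2) % 2^M) :=
    fun z => Sp_mod M (Nat.mod_modEq (3*z+2) (2^M)).symm
  simp only [hrw]
  apply Finset.sum_bij (fun z _ => (3*z+2) % 2^M)
  · intro a ha
    exact Finset.mem_range.mpr (Nat.mod_lt _ (pow_pos (by norm_num) M))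
  · intro a₁ ha₁ a₂ ha₂ h
    have hco : Nat.Coprime 3 (2^M) := Nat.Coprime.pow_right M (by norm_num)
    have h1 : 3*a₁+2 ≡ 3*a₂+2 [MOD 2^M] := by
      have : (3*a₁+2) % 2^M = (3*a₂+2) % 2^M := h
      exact this
    have h2 : 3*a₁ ≡ 3*a₂ [MOD 2^M] := by
      have := Nat.ModEq.add_right_cancel' 2 h1
      exact this
    have h3 : a₁ ≡ a₂ [MOD 2^M] := Nat.ModEq.cancel_left_of_coprime hco.symm h2
    have h4 : a₁ % 2^M = a₂ % 2^M := h3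
    rwa [Nat.mod_eq_of_lt (Finset.mem_range.mp ha₁),
      Nat.mod_eq_of_lt (Finset.mem_range.mp ha₂)] at h4
  · -- surjective
    intro b hb
    have hinj : ∀ (a₁ a₂ : ℕ) (ha₁ : a₁ ∈ Finset.range (2^M)) (ha₂ : a₂ ∈ Finset.range (2^M)),
        (fun z (_ : z ∈ Finset.range (2^M)) => (3*z+2) % 2^M) a₁ ha₁ =
        (fun z (_ : z ∈ Finset.range (2^M)) => (3*z+2) % 2^M) a₂ ha₂ → a₁ = a₂ := by
      intro a₁ a₂ ha₁ ha₂ h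
      have hco : Nat.Coprime 3 (2^M) := Nat.Coprime.pow_right M (by norm_num)
      have h1 : 3*a₁+2 ≡ 3*a₂+2 [MOD 2^M] := h
      have h2 : 3*a₁ ≡ 3*a₂ [MOD 2^M] := Nat.ModEq.add_right_cancel' 2 h1
      have h3 : a₁ ≡ a₂ [MOD 2^M] := Nat.ModEq.cancel_left_of_coprime hco.symm h2
      have h4 : a₁ % 2^M = a₂ % 2^M := h3
      rwa [Nat.mod_eq_of_lt (Finset.mem_range.mp ha₁),
        Nat.mod_eq_of_lt (Finset.mem_range.mp ha₂)] at h4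
    obtain ⟨a, ha, hab⟩ := Finset.surj_on_of_inj_on_of_card_le
      (fun z (_ : z ∈ Finset.range (2^M)) => (3*z+2) % 2^M)
      (fun a ha => Finset.mem_range.mpr (Nat.mod_lt _ (pow_pos (by norm_num) M)))
      hinj le_rfl b hb
    exact ⟨a, ha, hab.symm⟩
  · intro a ha; rfl

lemma second_moment : ∀ M : ℕ, ∑ y ∈ Finset.range (2^M), ((2 * Sp M y : ℤ) - M)^2 = M * 2^M := by
  intro M
  induction M with
  | zero => simp [Sp_zero]
  | succ M ih =>
    have h2 : (2:ℕ)^(M+1) = 2 * 2^M := by ring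
    rw [h2, sum_range_two_mul]
    push_cast
    have hsplit : ∀ z, ((2 * Sp (M+1) (2*z) : ℤ) - ((M:ℤ)+1))^2 + ((2 * Sp (M+1) (2*z+1) : ℤ) - ((M:ℤ)+1))^2
        = (((2 * Sp M z : ℤ) - M) - 1)^2 + (((2 * Sp M (3*z+2) : ℤ) - M) + 1)^2 := by
      intro z
      rw [Sp_even, Sp_odd]
      push_cast
      ring
    rw [Finset.sum_congr rfl (fun z _ => hsplit z), Finset.sum_add_distrib]
    have ha : ∑ z ∈ Finset.range (2^M), (((2 * Sp M (3*z+2) : ℤ) - M) + 1)^2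
        = ∑ y ∈ Finset.range (2^M), (((2 * Sp M y : ℤ) - M) + 1)^2 :=
      sum_aff M (fun t => ((2 * t : ℤ) - M + 1)^2)
    rw [ha, ← Finset.sum_add_distrib]
    have hcomb : ∀ y, (((2 * Sp M y : ℤ) - M) - 1)^2 + (((2 * Sp M y : ℤ) - M) + 1)^2
        = 2 * ((2 * Sp M y : ℤ) - M)^2 + 2 := by intro y; ring
    rw [Finset.sum_congr rfl (fun y _ => hcomb y), Finset.sum_add_distrib,
      ← Finset.mul_sum, ih]
    simp only [Finset.sum_const, Finset.card_range, nsmul_eq_mul]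
    push_cast
    ring

lemma bad_count (M : ℕ) :
    ((Finset.range (2^M)).filter (fun y => 3*M < 5 * Sp M y)).card * M * M ≤ 25 * (M * 2^M) := by
  classical
  set B := (Finset.range (2^M)).filter (fun y => 3*M < 5 * Sp M y) with hB
  have hpt : ∀ y ∈ B, (M:ℤ)^2 ≤ 25 * ((2 * Sp M y : ℤ) - M)^2 := by
    intro y hy
    have h5 : 3*M < 5 * Sp M y := (Finset.mem_filter.mp hy).2
    have h6 : (5:ℤ) * ((2 * Sp M y : ℤ) - M) ≥ M := by
      have : (5:ℤ) * Sp M y ≥ 3*M + 1 := by exact_mod_cast h5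
      linarith
    have hM0 : (0:ℤ) ≤ M := Int.natCast_nonneg M
    nlinarith [sq_nonneg ((2 * Sp M y : ℤ) - M)]
  have hsum : (B.card : ℤ) * M^2 ≤ ∑ y ∈ B, 25 * ((2 * Sp M y : ℤ) - M)^2 := by
    calc (B.card : ℤ) * M^2 = ∑ _y ∈ B, (M:ℤ)^2 := by rw [Finset.sum_const]; ring
    _ ≤ _ := Finset.sum_le_sum hpt
  have hsub : ∑ y ∈ B, 25 * ((2 * Sp M y : ℤ) - M)^2
      ≤ ∑ y ∈ Finset.range (2^M), 25 * ((2 * Sp M y : ℤ) - M)^2 := by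
    apply Finset.sum_le_sum_of_subset_of_nonneg (Finset.filter_subset _ _)
    intro i _ _
    positivity
  have htot : ∑ y ∈ Finset.range (2^M), 25 * ((2 * Sp M y : ℤ) - M)^2 = 25 * ((M:ℤ) * 2^M) := by
    rw [← Finset.mul_sum, second_moment]
  have hz : (B.card : ℤ) * M^2 ≤ 25 * ((M:ℤ) * 2^M) := le_trans hsum (le_trans hsub htot.le)
  have hn : ((B.card * M * M : ℕ) : ℤ) ≤ ((25 * (M * 2^M) : ℕ) : ℤ) := by
    push_cast
    nlinarith [hz]
  exact_mod_cast hn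

lemma fiber_card : ∀ (M m : ℕ) (s : Finset ℕ), (∀ n ∈ s, T^[M] n = m) → s.card ≤ 2^M := by
  intro M
  induction M with
  | zero =>
    intro m s hs
    have : s ⊆ {m} := by
      intro n hn
      simp only [Finset.mem_singleton]
      simpa using hs n hn
    simpa using Finset.card_le_card this
  | succ M ih =>
    intro m s hs
    classical
    have hsplit := Finset.card_filter_add_card_filter_not (s := s) (fun n => n % 2 = 0)
    set se := s.filter (fun n => n % 2 = 0) with hse
    set so := s.filter (fun n => ¬ (n % 2 = 0)) with hso
    have he : se.card ≤ 2^M := by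
      have himg : ∀ v ∈ se.image T, T^[M] v = m := by
        intro v hv
        obtain ⟨n, hn, rfl⟩ := Finset.mem_image.mp hv
        have := hs n (Finset.mem_filter.mp hn).1
        rwa [Function.iterate_succ_apply] at this
      have hcard : se.card = (se.image T).card := by
        rw [Finset.card_image_of_injOn]
        intro a ha b hb hab
        have ha2 : a % 2 = 0 := (Finset.mem_filter.mp ha).2
        have hb2 : b % 2 = 0 := (Finset.mem_filter.mp hb).2
        rw [T_even ha2, T_even hb2] at hab
        omega
      rw [hcard]
      exact ih m _ himg
    have ho : so.card ≤ 2^M := by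
      have himg : ∀ v ∈ so.image T, T^[M] v = m := by
        intro v hv
        obtain ⟨n, hn, rfl⟩ := Finset.mem_image.mp hv
        have := hs n (Finset.mem_filter.mp hn).1
        rwa [Function.iterate_succ_apply] at this
      have hcard : so.card = (so.image T).card := by
        rw [Finset.card_image_of_injOn]
        intro a ha b hb hab
        have ha2 : a % 2 = 1 := by have := (Finset.mem_filter.mp ha).2; omega
        have hb2 : b % 2 = 1 := by have := (Finset.mem_filter.mp hb).2; omega
        rw [T_odd ha2, T_odd hb2] at hab
        omega
      rw [hcard]
      exact ih m _ himg
    have : (2:ℕ)^(M+1) = 2^M + 2^M := by ring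
    omega

lemma residue_count (q : ℕ) (R : Finset ℕ) (N : ℕ) :
    ((Finset.Iic N).filter (fun n => n % q ∈ R)).card ≤ (N / q + 1) * R.card := by
  classical
  have h := Finset.card_le_card_of_injOn (fun n => (n / q, n % q))
    (s := (Finset.Iic N).filter (fun n => n % q ∈ R))
    (t := (Finset.range (N / q + 1)) ×ˢ R) ?_ ?_
  · calc _ ≤ _ := h
    _ = (N / q + 1) * R.card := by rw [Finset.card_product, Finset.card_range]
  · intro n hn
    obtain ⟨hn1, hn2⟩ := Finset.mem_filter.mp hn
    refine Finset.mem_product.mpr ⟨Finset.mem_range.mpr ?_, hn2⟩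
    have : n ≤ N := Finset.mem_Iic.mp hn1
    exact Nat.lt_succ_of_le (Nat.div_le_div_right this)
  · intro a _ b _ hab
    simp only [Prod.mk.injEq] at hab
    have ha := Nat.div_add_mod a q
    have hb := Nat.div_add_mod b q
    rw [hab.1, hab.2] at ha
    omega

lemma pow_ineq : ∀ t : ℕ, 13 ≤ t → 8 * 27^t ≤ 32^t := by
  intro t ht
  induction t with
  | zero => omega
  | succ t ih =>
    rcases Nat.lt_or_ge t 13 with h | h
    · have : t = 12 := by omega
      subst this
      norm_num
    · have h1 := ih h
      calc 8 * 27^(t+1) = 27 * (8 * 27^t) := by ring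
      _ ≤ 27 * 32^t := Nat.mul_le_mul_left _ h1
      _ ≤ 32 * 32^t := Nat.mul_le_mul_right _ (by norm_num)
      _ = 32^(t+1) := by ring

lemma drop (t n : ℕ) (ht : 13 ≤ t) (hS : 5 * Sp (5*t) n ≤ 3 * (5*t))
    (hn : 8 * 2^(5*t) + 1 ≤ n) : 2 * T^[5*t] n < n := by
  set M := 5*t with hM
  have hS3 : Sp M n ≤ 3*t := by omega
  have h3S : 3 ^ (Sp M n) ≤ 27^t := by
    calc 3 ^ (Sp M n) ≤ 3 ^ (3*t) := Nat.pow_le_pow_right (by norm_num) hS3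
    _ = 27^t := by rw [pow_mul]; norm_num
  have h8 : 8 * 3 ^ (Sp M n) ≤ 2^M := by
    calc 8 * 3 ^ (Sp M n) ≤ 8 * 27^t := Nat.mul_le_mul_left _ h3S
    _ ≤ 32^t := pow_ineq t ht
    _ = 2^M := by rw [hM, pow_mul]; norm_num
  have hg := growth M n
  have hq4 : (4:ℕ)^M = 2^M * 2^M := by rw [← Nat.mul_pow]
  set q := 2^M with hq
  set a := 3 ^ (Sp M n) with hA
  -- hg : q * T^[M] n ≤ a * n + 4^M,  h8 : 8*a ≤ q,  hn : 8*q+1 ≤ n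
  rw [hq4] at hg
  have hq1 : 1 ≤ q := Nat.one_le_two_pow
  have key : q * (2 * T^[M] n) < q * n := by
    have h1 : q * (2 * T^[M] n) ≤ 2 * a * n + 2 * (q * q) := by nlinarith [hg]
    have h2 : 8 * (2 * a * n) ≤ 2 * q * n := by nlinarith [h8]
    have h3 : 8 * (2 * (q * q)) < 2 * q * n := by nlinarith [hn, hq1]
    have h4 : 8 * (q * (2 * T^[M] n)) < 8 * (q * n) := by nlinarith [h1, h2, h3]
    omega
  exact Nat.lt_of_mul_lt_mul_left key

open scoped Classical in
lemma count_key_s14 (A : Set ℕ) (t N : ℕ) (ht : 13 ≤ t) :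
    ((Finset.Iic N).filter (· ∈ A)).card ≤
      2^(5*t) * ((Finset.Iic N).filter (· ∈ Hf (fun y => (y:ℝ)/2) A)).card
      + (N / 2^(5*t) + 1) * ((Finset.range (2^(5*t))).filter (fun y => 3*(5*t) < 5 * Sp (5*t) y)).card
      + (8 * 2^(5*t) + 1) := by
  classical
  set M := 5*t with hM
  set q := 2^M with hq
  set AN := (Finset.Iic N).filter (· ∈ A) with hAN
  set HN := (Finset.Iic N).filter (· ∈ Hf (fun y => (y:ℝ)/2) A) with hHN
  set P : ℕ → Prop := fun n => 5 * Sp M n ≤ 3*M ∧ 8*q+1 ≤ n with hP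
  set GoodN := AN.filter P with hGood
  set BadRes := (Finset.range q).filter (fun y => 3*M < 5 * Sp M y) with hBad
  -- Step A : AN.card ≤ GoodN.card + (N/q+1)*BadRes.card + (8q+1)
  have stepA : AN.card ≤ GoodN.card + (N / q + 1) * BadRes.card + (8*q+1) := by
    have hsplit := Finset.card_filter_add_card_filter_not (s := AN) P
    have hsub : AN.filter (fun n => ¬ P n) ⊆
        ((Finset.Iic N).filter (fun n => n % q ∈ BadRes)) ∪ (Finset.range (8*q+1)) := by
      intro n hn
      obtain ⟨hn1, hn2⟩ := Finset.mem_filter.mp hn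
      have hnN : n ∈ Finset.Iic N := (Finset.mem_filter.mp hn1).1
      rw [hP] at hn2
      push_neg at hn2
      rcases le_or_gt (8*q+1) n with hge | hlt
      ·
        have hbad : 3*M < 5 * Sp M n := by
          rcases Nat.lt_or_ge (3*M) (5 * Sp M n) with h | h
          · exact h
          · exact absurd hge (by omega)
        apply Finset.mem_union_left
        refine Finset.mem_filter.mpr ⟨hnN, ?_⟩
        refine Finset.mem_filter.mpr ⟨Finset.mem_range.mpr (Nat.mod_lt _ ?_), ?_⟩
        · exact pow_pos (by norm_num) M
        · have : Sp M (n % q) = Sp M n := Sp_mod M (Nat.mod_modEq n q)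
          omega
      · exact Finset.mem_union_right _ (Finset.mem_range.mpr hlt)
    have hsplit' : GoodN.card + (AN.filter (fun n => ¬ P n)).card = AN.card := hsplit
    have hcard2 : (AN.filter (fun n => ¬ P n)).card ≤ (N / q + 1) * BadRes.card + (8*q+1) := by
      calc (AN.filter (fun n => ¬ P n)).card
          ≤ (((Finset.Iic N).filter (fun n => n % q ∈ BadRes)) ∪ (Finset.range (8*q+1))).card :=
            Finset.card_le_card hsub
        _ ≤ ((Finset.Iic N).filter (fun n => n % q ∈ BadRes)).card + (Finset.range (8*q+1)).card :=
            Finset.card_union_le _ _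
        _ ≤ (N / q + 1) * BadRes.card + (8*q+1) := by
            have := residue_count q BadRes N
            simp only [Finset.card_range]
            omega
    omega
  -- Step B : GoodN.card ≤ q * HN.card
  have stepB : GoodN.card ≤ q * HN.card := by
    have himg : ∀ n ∈ GoodN, T^[M] n ∈ HN := by
      intro n hn
      obtain ⟨hn1, hn2⟩ := Finset.mem_filter.mp hn
      obtain ⟨hnN, hnA⟩ := Finset.mem_filter.mp hn1
      have hdrop : 2 * T^[M] n < n := drop t n ht hn2.1 hn2.2
      have hnN' : n ≤ N := Finset.mem_Iic.mp hnN
      refine Finset.mem_filter.mpr ⟨Finset.mem_Iic.mpr (by omega), ?_⟩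
      refine ⟨n, hnA, M, rfl, ?_⟩
      have : (2 * T^[M] n : ℝ) < n := by exact_mod_cast hdrop
      linarith
    have hcardeq : GoodN.card = ∑ b ∈ GoodN.image (fun n => T^[M] n),
        (GoodN.filter (fun n => T^[M] n = b)).card :=
      Finset.card_eq_sum_card_fiberwise (fun n hn => Finset.mem_image_of_mem _ hn)
    have hbound : ∀ b ∈ GoodN.image (fun n => T^[M] n),
        (GoodN.filter (fun n => T^[M] n = b)).card ≤ q := by
      intro b _
      exact fiber_card M b _ (fun n hn => (Finset.mem_filter.mp hn).2)
    calc GoodN.card = _ := hcardeq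
      _ ≤ ∑ _b ∈ GoodN.image (fun n => T^[M] n), q := Finset.sum_le_sum hbound
      _ = (GoodN.image (fun n => T^[M] n)).card * q := by rw [Finset.sum_const, smul_eq_mul]
      _ ≤ HN.card * q := by
          have : GoodN.image (fun n => T^[M] n) ⊆ HN := by
            intro b hb
            obtain ⟨n, hn, rfl⟩ := Finset.mem_image.mp hb
            exact himg n hn
          exact Nat.mul_le_mul_right q (Finset.card_le_card this)
      _ = q * HN.card := Nat.mul_comm _ _
  omega

open scoped Classical in
lemma ncard_bridge (A : Set ℕ) (N : ℕ) :
    (A ∩ Set.Iic N).ncard = ((Finset.Iic N).filter (· ∈ A)).card := by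
  have h : A ∩ Set.Iic N = ↑((Finset.Iic N).filter (· ∈ A)) := by
    ext n
    simp only [Set.mem_inter_iff, Finset.coe_filter, Set.mem_setOf_eq, Finset.mem_Iic,
      Set.mem_Iic]
    tauto
  rw [h, Set.ncard_coe_finset]

theorem stmt14 : PDP (Hf (fun y => (y : ℝ) / 2)) := by
  classical
  intro A hA
  set c := ud A with hc
  set u : ℕ → ℝ := fun n => ((A ∩ Set.Iic n).ncard : ℝ) / n with hu
  set v : ℕ → ℝ := fun n => ((Hf (fun y => (y:ℝ)/2) A ∩ Set.Iic n).ncard : ℝ) / n with hv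
  have hlimeq : Filter.limsup u atTop = c := rfl
  clear_value c
  -- parameters
  set t := max 13 (⌈(40:ℝ)/c⌉₊ + 1) with ht
  have ht13 : 13 ≤ t := le_max_left _ _
  set M := 5*t with hM
  set q := (2:ℕ)^M with hq
  have hM0 : 0 < M := by omega
  have hq0 : 0 < q := pow_pos (by norm_num) M
  have hq0R : (0:ℝ) < q := by exact_mod_cast hq0
  have hcM : (200:ℝ) ≤ c * M := by
    have h1 : (40:ℝ)/c ≤ ⌈(40:ℝ)/c⌉₊ := Nat.le_ceil _
    have h2 : (⌈(40:ℝ)/c⌉₊ : ℝ) ≤ t := by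
      have : (⌈(40:ℝ)/c⌉₊ + 1 : ℕ) ≤ t := le_max_right _ _
      exact_mod_cast le_trans (Nat.le_succ _) this
    have h3 : (40:ℝ)/c ≤ t := le_trans h1 h2
    have h4 : (M:ℝ) = 5 * t := by rw [hM]; push_cast; ring
    have h5 : (40:ℝ) ≤ c * t := by
      rw [div_le_iff₀ hA] at h3
      linarith [mul_comm c (t:ℝ)]
    rw [h4]
    nlinarith
  set B := ((Finset.range q).filter (fun y => 3*M < 5 * Sp M y)).card with hB
  have hBM : B * M ≤ 25 * q := by
    have h1 := bad_count M
    have h2 : 25 * (M * q) = (25 * q) * M := by ring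
    rw [h2] at h1
    exact Nat.le_of_mul_le_mul_right h1 hM0
  have hBR : (B:ℝ) ≤ c/8 * q := by
    have h1 : (B:ℝ) * M ≤ 25 * q := by exact_mod_cast hBM
    have hB0 : (0:ℝ) ≤ B := Nat.cast_nonneg B
    nlinarith [mul_le_mul_of_nonneg_left h1 (le_of_lt hA), mul_le_mul_of_nonneg_left hcM hB0]
  set n₀ := 8*q+1 with hn₀
  set N₁ := max (q + ⌈(8*((n₀:ℝ)+1))/c⌉₊) 1 with hN₁
  -- frequently large density
  have hcob : IsCoboundedUnder (· ≤ ·) atTop u :=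
    isCoboundedUnder_le_of_eventually_le atTop (x := 0)
      (Filter.Eventually.of_forall (fun n => by
        simp only [hu]
        positivity))
  have hlim : c/2 < Filter.limsup u atTop := by
    rw [hlimeq]
    linarith
  have hfreq : ∃ᶠ N in atTop, c/2 < u N := frequently_lt_of_lt_limsup hcob hlim
  have hfreq2 : ∃ᶠ N in atTop, (c/2 < u N ∧ N₁ ≤ N) :=
    hfreq.and_eventually (eventually_ge_atTop N₁)
  -- key step
  have hkey : ∀ N : ℕ, c/2 < u N → N₁ ≤ N → c/(4*q) ≤ v N := by
    intro N h1 h2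
    have hN1 : 1 ≤ N := le_trans (le_max_right _ _) h2
    have hNR : (0:ℝ) < N := by exact_mod_cast hN1
    set AN := (Finset.Iic N).filter (· ∈ A) with hAN
    set HN := (Finset.Iic N).filter (· ∈ Hf (fun y => (y:ℝ)/2) A) with hHN
    have huN : u N = (AN.card : ℝ) / N := by
      show ((A ∩ Set.Iic N).ncard : ℝ) / N = (AN.card : ℝ) / N
      rw [ncard_bridge]
    have hvN : v N = (HN.card : ℝ) / N := by
      show ((Hf (fun y => (y:ℝ)/2) A ∩ Set.Iic N).ncard : ℝ) / N = (HN.card : ℝ) / N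
      rw [ncard_bridge]
    have hAnc : c/2 * N < AN.card := by
      rw [huN] at h1
      rw [lt_div_iff₀ hNR] at h1
      linarith
    have hck := count_key_s14 A t N ht13
    have hckR : (AN.card : ℝ) ≤ q * HN.card + ((N / q : ℕ) + 1) * B + n₀ := by
      exact_mod_cast hck
    have hdivR : ((N / q : ℕ) : ℝ) ≤ (N:ℝ) / q := Nat.cast_div_le
    have hBadR : (((N / q : ℕ) : ℝ) + 1) * B ≤ c/8 * N + c/8 * q := by
      have hstep : (((N / q : ℕ) : ℝ) + 1) * B ≤ ((N:ℝ)/q + 1) * (c/8 * q) := by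
        apply mul_le_mul (by linarith) hBR (Nat.cast_nonneg B) (by positivity)
      have heq : ((N:ℝ)/q + 1) * (c/8 * q) = c/8 * N + c/8 * q := by
        field_simp
      linarith
    have hN₁R : c/8 * q + (n₀:ℝ) + 1 ≤ c/8 * N := by
      have hge : (q + ⌈(8*((n₀:ℝ)+1))/c⌉₊ : ℕ) ≤ N := le_trans (le_max_left _ _) h2
      have hgeR : (q:ℝ) + ⌈(8*((n₀:ℝ)+1))/c⌉₊ ≤ N := by exact_mod_cast hge
      have hceil : (8*((n₀:ℝ)+1))/c ≤ ⌈(8*((n₀:ℝ)+1))/c⌉₊ := Nat.le_ceil _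
      have h3 : (q:ℝ) + (8*((n₀:ℝ)+1))/c ≤ N := by linarith
      have h4 : c/8 * ((q:ℝ) + (8*((n₀:ℝ)+1))/c) = c/8 * q + ((n₀:ℝ)+1) := by
        field_simp
      have h5 := mul_le_mul_of_nonneg_left h3 (by linarith : (0:ℝ) ≤ c/8)
      rw [h4] at h5
      linarith
    -- combine
    have hfinal : c/4 * N ≤ (q:ℝ) * HN.card := by
      have : (AN.card : ℝ) ≤ q * HN.card + c/8 * N + c/8 * q + n₀ := by linarith
      linarith
    rw [hvN]
    rw [div_le_div_iff₀ (by positivity) hNR]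
    linarith
  -- conclude
  have hbdd : IsBoundedUnder (· ≤ ·) atTop v := by
    refine isBoundedUnder_of_eventually_le (a := 2) ?_
    filter_upwards [eventually_ge_atTop 1] with N hN1
    have hNR : (0:ℝ) < N := by exact_mod_cast hN1
    have hle : (Hf (fun y => (y:ℝ)/2) A ∩ Set.Iic N).ncard ≤ N + 1 := by
      rw [ncard_bridge]
      calc ((Finset.Iic N).filter (· ∈ Hf (fun y => (y:ℝ)/2) A)).card
          ≤ (Finset.Iic N).card := Finset.card_le_card (Finset.filter_subset _ _)
        _ = N + 1 := Nat.card_Iic N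
    show v N ≤ 2
    rw [hv]
    rw [div_le_iff₀ hNR]
    have : ((Hf (fun y => (y:ℝ)/2) A ∩ Set.Iic N).ncard : ℝ) ≤ N + 1 := by exact_mod_cast hle
    have hN1R : (1:ℝ) ≤ N := by exact_mod_cast hN1
    have : ((N:ℝ) + 1) ≤ 2 * N := by linarith
    linarith
  have hδ : (0:ℝ) < c/(4*q) := by positivity
  have hle : c/(4*q) ≤ Filter.limsup v atTop := by
    apply Filter.le_limsup_of_frequently_le _ hbdd
    exact hfreq2.mono (fun N hN => hkey N hN.1 hN.2)
  calc (0:ℝ) < c/(4*q) := hδ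
  _ ≤ ud (Hf (fun y => (y:ℝ)/2) A) := hle
end

section
/- For every c > 0, the map H_f with f(y) = c·y is positive upper density preserving, assuming that H_g with g(y) = y/2 is positive upper density preserving. -/
open Filter

lemma ud_mono {A B : Set ℕ} (h : A ⊆ B) : ud A ≤ ud B := by
  apply Filter.limsup_le_limsup
  · filter_upwards [Filter.eventually_ge_atTop 1] with n hn
    have hc : (A ∩ Set.Iic n).ncard ≤ (B ∩ Set.Iic n).ncard :=
      Set.ncard_le_ncard (Set.inter_subset_inter_left _ h)
        ((Set.finite_Iic n).inter_of_right _)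
    gcongr
  · apply Filter.IsBoundedUnder.isCoboundedUnder_le (α := ℝ)
    apply Filter.isBoundedUnder_of_eventually_ge (a := (0:ℝ))
    filter_upwards with n
    positivity
  · apply Filter.isBoundedUnder_of_eventually_le (a := (2:ℝ))
    filter_upwards [Filter.eventually_ge_atTop 1] with n hn
    have h1 : (B ∩ Set.Iic n).ncard ≤ n + 1 := by
      have h2 := Set.ncard_le_ncard (Set.inter_subset_right (s := B) (t := Set.Iic n))
        (Set.finite_Iic n)
      have h3 : (Set.Iic n : Set ℕ).ncard = n + 1 := by
        rw [show (Set.Iic n : Set ℕ) = ↑(Finset.Iic n) by simp, Set.ncard_coe_finset,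
          Nat.card_Iic]
      omega
    have hn' : (1:ℝ) ≤ n := by exact_mod_cast hn
    rw [div_le_iff₀ (by linarith)]
    calc ((B ∩ Set.Iic n).ncard : ℝ) ≤ (n:ℝ) + 1 := by exact_mod_cast h1
      _ ≤ 2 * n := by linarith

lemma Hf_mono (f : ℕ → ℝ) {A B : Set ℕ} (h : A ⊆ B) : Hf f A ⊆ Hf f B :=
  fun m ⟨n, hn, k, hk, hm⟩ => ⟨n, h hn, k, hk, hm⟩

lemma Hf_comp (r : ℕ) (A : Set ℕ) :
    Hf (fun y => (y:ℝ)/2) (Hf (fun y => (y:ℝ)/2^r) A) ⊆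
      Hf (fun y => (y:ℝ)/2^(r+1)) A := by
  rintro m ⟨n', ⟨n, hn, j, hj, hn'⟩, k, hk, hm⟩
  refine ⟨n, hn, k + j, ?_, ?_⟩
  · rw [Function.iterate_add_apply, hj, hk]
  · have h2 : (0:ℝ) < 2^r := by positivity
    simp only at hm hn' ⊢
    have key : (n:ℝ)/2^(r+1) = ((n:ℝ)/2^r)/2 := by
      rw [div_div, pow_succ]
    rw [key]
    linarith
  
lemma iter_subset (r : ℕ) (A : Set ℕ) :
    (Hf (fun y => (y:ℝ)/2))^[r+1] A ⊆ Hf (fun y => (y:ℝ)/2^(r+1)) A := by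
  induction r with
  | zero => simpa using fun m hm => hm
  | succ r ih =>
    rw [Function.iterate_succ_apply']
    exact (Hf_mono _ ih).trans (Hf_comp (r+1) A)

lemma iter_pos (hhalf : PDP (Hf (fun y => (y : ℝ) / 2))) (r : ℕ) {A : Set ℕ}
    (hA : 0 < ud A) : 0 < ud ((Hf (fun y => (y:ℝ)/2))^[r+1] A) := by
  induction r with
  | zero => exact hhalf A hA
  | succ r ih =>
    rw [Function.iterate_succ_apply']
    exact hhalf _ ih

theorem stmt15 (hhalf : PDP (Hf (fun y => (y : ℝ) / 2))) (c : ℝ) (hc : 0 < c) :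
    PDP (Hf (fun y => c * y)) := by
  obtain ⟨r, hr⟩ := exists_pow_lt_of_lt_one hc (by norm_num : (1:ℝ)/2 < 1)
  intro A hA
  have h1 := iter_pos hhalf r hA
  have h2 : Hf (fun y => (y:ℝ)/2^(r+1)) A ⊆ Hf (fun y => c * y) A := by
    rintro m ⟨n, hn, k, hk, hm⟩
    refine ⟨n, hn, k, hk, lt_of_lt_of_le hm ?_⟩
    have : ((1:ℝ)/2)^(r+1) ≤ c := le_of_lt (lt_of_le_of_lt (by
      apply pow_le_pow_of_le_one (by norm_num) (by norm_num); omega) hr)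
    have hn0 : (0:ℝ) ≤ n := Nat.cast_nonneg n
    calc (n:ℝ)/2^(r+1) = ((1:ℝ)/2)^(r+1) * n := by rw [div_pow]; ring
      _ ≤ c * n := by nlinarith
  calc (0:ℝ) < ud ((Hf (fun y => (y:ℝ)/2))^[r+1] A) := h1
    _ ≤ ud (Hf (fun y => (y:ℝ)/2^(r+1)) A) := ud_mono (iter_subset r A)
    _ ≤ ud (Hf (fun y => c * y) A) := ud_mono h2
end

section
/- For every c > 0, the set M_c = {y ∈ ℕ : ∃ k, T^k(y) < c·y} has natural density 1. -/
open Filter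

def sm (m y : ℕ) : ℕ := ∑ i ∈ Finset.range m, X i y
lemma T_add (a b : ℕ) : T (a + 2*b) = T a + 3^(a%2) * b := by
  unfold T
  rcases Nat.even_or_odd a with h | h
  · have h0 : a % 2 = 0 := Nat.even_iff.mp h
    have h1 : (a + 2*b) % 2 = 0 := by omega
    simp only [h0, h1, if_true, pow_zero, one_mul]
    omega
  · have h0 : a % 2 = 1 := Nat.odd_iff.mp h
    have h1 : (a + 2*b) % 2 = 1 := by omega
    simp only [h0, h1, pow_one]
    norm_num
    omega

lemma iterate_shift (m y t : ℕ) : T^[m] (y + 2^m * t) = T^[m] y + 3^(sm m y) * t := by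
  induction m generalizing t with
  | zero => simp [sm]
  | succ m ih =>
    have e1 : y + 2^(m+1) * t = y + 2^m * (2*t) := by ring_nf
    rw [Function.iterate_succ_apply', Function.iterate_succ_apply', e1, ih,
      show 3^(sm m y) * (2*t) = 2 * (3^(sm m y) * t) by ring, T_add]
    have : sm (m+1) y = sm m y + X m y := by
      unfold sm; rw [Finset.sum_range_succ]
    rw [this, X]
    ring

lemma X_shift {i m : ℕ} (h : i < m) (y t : ℕ) : X i (y + 2^m * t) = X i y := by
  have e1 : y + 2^m * t = y + 2^i * (2^(m-i) * t) := by
    rw [← mul_assoc, ← pow_add, Nat.add_sub_cancel' h.le]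
  rw [X, X, e1, iterate_shift]
  have : 2 ∣ 2^(m-i) := dvd_pow_self 2 (by omega)
  obtain ⟨w, hw⟩ := this
  rw [hw, show 3 ^ sm i y * (2 * w * t) = 2 * (3 ^ sm i y * (w * t)) by ring]
  rw [Nat.add_mul_mod_self_left]

lemma sm_shift (m y t : ℕ) : sm m (y + 2^m * t) = sm m y :=
  Finset.sum_congr rfl fun i hi => X_shift (Finset.mem_range.mp hi) y t

lemma sm_mod (m y : ℕ) : sm m (y % 2^m) = sm m y := by
  conv_rhs => rw [show y = y % 2^m + 2^m * (y / 2^m) from (Nat.mod_add_div y (2^m)).symm]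
  rw [sm_shift]

lemma sm_le (m y : ℕ) : sm m y ≤ m := by
  calc sm m y ≤ ∑ i ∈ Finset.range m, 1 := Finset.sum_le_sum fun i _ => Nat.le_of_lt_succ (Nat.mod_lt _ (by norm_num))
  _ = m := by simp

lemma X_lt_two (i y : ℕ) : X i y < 2 := Nat.mod_lt _ (by norm_num)

lemma X_mod_s16 {i m : ℕ} (h : i < m) (y : ℕ) : X i (y % 2^m) = X i y := by
  conv_rhs => rw [show y = y % 2^m + 2^m * (y / 2^m) from (Nat.mod_add_div y (2^m)).symm,
    X_shift h]

lemma vec_inj (m : ℕ) : ∀ a b, a < 2^m → b < 2^m → (∀ i, i < m → X i a = X i b) → a = b := by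
  induction m with
  | zero => intro a b ha hb _; simp at ha hb; omega
  | succ m ih =>
    intro a b ha hb hX
    have hr : a % 2^m = b % 2^m := by
      refine ih _ _ (Nat.mod_lt _ (by positivity)) (Nat.mod_lt _ (by positivity)) ?_
      intro i hi
      rw [X_mod_s16 hi, X_mod_s16 hi]
      exact hX i (by omega)
    have hta : a / 2^m < 2 := by
      apply Nat.div_lt_of_lt_mul; rw [pow_succ] at ha; omega
    have htb : b / 2^m < 2 := by
      apply Nat.div_lt_of_lt_mul; rw [pow_succ] at hb; omega
    have hXm := hX m (by omega)
    have ea : T^[m] a = T^[m] (a % 2^m) + 3^(sm m (a % 2^m)) * (a / 2^m) := by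
      conv_lhs => rw [show a = a % 2^m + 2^m * (a / 2^m) from (Nat.mod_add_div a (2^m)).symm,
        iterate_shift]
    have eb : T^[m] b = T^[m] (b % 2^m) + 3^(sm m (b % 2^m)) * (b / 2^m) := by
      conv_lhs => rw [show b = b % 2^m + 2^m * (b / 2^m) from (Nat.mod_add_div b (2^m)).symm,
        iterate_shift]
    rw [hr] at ea
    have hodd : 3^(sm m (b % 2^m)) % 2 = 1 := Nat.odd_iff.mp (Odd.pow ⟨1, by norm_num⟩)
    have : a / 2^m = b / 2^m := by
      simp only [X, ea, eb] at hXm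
      generalize T^[m] (b % 2^m) = u at hXm
      generalize 3 ^ sm m (b % 2 ^ m) = k at hXm hodd
      rcases (Nat.le_of_lt_succ hta).lt_or_eq.imp Nat.lt_one_iff.mp id with h1 | h1 <;>
        rcases (Nat.le_of_lt_succ htb).lt_or_eq.imp Nat.lt_one_iff.mp id with h2 | h2 <;>
          rw [h1, h2] at hXm <;> omega
    calc a = a % 2^m + 2^m * (a / 2^m) := (Nat.mod_add_div a (2^m)).symm
    _ = b % 2^m + 2^m * (b / 2^m) := by rw [hr, this]
    _ = b := Nat.mod_add_div b (2^m)

lemma badres_count (m s0 : ℕ) :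
    ((Finset.range (2^m)).filter (fun r => s0 < sm m r)).card * 2^(s0+1) ≤ 3^m := by
  classical
  set bad := (Finset.range (2^m)).filter (fun r => s0 < sm m r) with hbad
  set V : ℕ → Finset ℕ := fun r => (Finset.range m).filter (fun i => X i r = 1) with hV
  have hcardV : ∀ r, (V r).card = sm m r := by
    intro r
    rw [hV, Finset.card_filter, sm]
    refine Finset.sum_congr rfl fun i _ => ?_
    have := X_lt_two i r
    split <;> omega
  have hinj : Set.InjOn V bad := by
    intro a ha b hb hab
    simp only [hbad, Finset.mem_coe, Finset.mem_filter, Finset.mem_range] at ha hb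
    refine vec_inj m a b ha.1 hb.1 fun i hi => ?_
    have h1 : i ∈ V a ↔ i ∈ V b := by rw [hab]
    simp only [hV, Finset.mem_filter, Finset.mem_range] at h1
    have := X_lt_two i a; have := X_lt_two i b
    omega
  have hmaps : ∀ r ∈ bad, V r ∈ (Finset.range m).powerset.filter (fun A => s0 < A.card) := by
    intro r hr
    simp only [hbad, Finset.mem_filter, Finset.mem_range] at hr
    simp only [Finset.mem_filter, Finset.mem_powerset, hcardV]
    exact ⟨Finset.filter_subset _ _, hr.2⟩
  have h1 : bad.card ≤ ((Finset.range m).powerset.filter (fun A => s0 < A.card)).card :=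
    Finset.card_le_card_of_injOn V hmaps hinj
  have h2 : ((Finset.range m).powerset.filter (fun A => s0 < A.card)).card * 2^(s0+1)
      ≤ ∑ A ∈ (Finset.range m).powerset.filter (fun A => s0 < A.card), 2^A.card := by
    have := Finset.card_nsmul_le_sum ((Finset.range m).powerset.filter (fun A => s0 < A.card))
      (fun A => 2^A.card) (2^(s0+1)) (fun A hA => by
        have : s0 < A.card := (Finset.mem_filter.mp hA).2
        exact Nat.pow_le_pow_right (by norm_num) (by omega))
    simpa [smul_eq_mul] using this
  have h3 : ∑ A ∈ (Finset.range m).powerset.filter (fun A => s0 < A.card), 2^A.card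
      ≤ ∑ A ∈ (Finset.range m).powerset, 2^A.card :=
    Finset.sum_le_sum_of_subset (Finset.filter_subset _ _)
  have h4 : ∑ A ∈ (Finset.range m).powerset, 2^A.card = 3^m := by
    rw [Finset.sum_powerset]
    have : ∀ j ∈ Finset.range ((Finset.range m).card + 1),
        ∑ A ∈ Finset.powersetCard j (Finset.range m), 2^A.card = 2^j * m.choose j := by
      intro j _
      rw [Finset.sum_congr rfl (fun A hA => by
        rw [(Finset.mem_powersetCard.mp hA).2]), Finset.sum_const, smul_eq_mul,
        Finset.card_powersetCard, Finset.card_range, mul_comm]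
    rw [Finset.sum_congr rfl this, Finset.card_range]
    have := add_pow 2 1 m (R := ℕ)
    simp only [one_pow, mul_one, Nat.cast_id] at this
    rw [← this]
  calc bad.card * 2^(s0+1)
      ≤ ((Finset.range m).powerset.filter (fun A => s0 < A.card)).card * 2^(s0+1) :=
        Nat.mul_le_mul_right _ h1
  _ ≤ 3^m := by omega

lemma two_T_even {n : ℕ} (h : n % 2 = 0) : 2 * T n = n := by unfold T; rw [if_pos h]; omega
lemma two_T_odd {n : ℕ} (h : n % 2 = 1) : 2 * T n = 3 * n + 1 := by
  unfold T; rw [if_neg (by omega)]; omega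

lemma growth_s16 (m y : ℕ) :
    2^m * T^[m] y + 2^m ≤ 3^(sm m y) * y + 2^(m - sm m y) * 3^(sm m y) := by
  induction m with
  | zero => simp [sm]
  | succ m ih =>
    have hsm : sm (m+1) y = sm m y + X m y := by unfold sm; rw [Finset.sum_range_succ]
    have hsle : sm m y ≤ m := sm_le m y
    have hsub : m + 1 - sm m y = (m - sm m y) + 1 := by omega
    rcases (by have := Nat.mod_lt (T^[m] y) (y := 2) (by norm_num); omega :
        T^[m] y % 2 = 0 ∨ T^[m] y % 2 = 1) with h | h
    · have hX : X m y = 0 := h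
      rw [Function.iterate_succ_apply', hsm, hX, add_zero]
      have e : 2 * T (T^[m] y) = T^[m] y := two_T_even h
      have l1 : 2^(m+1) * T (T^[m] y) = 2^m * T^[m] y := by
        calc 2^(m+1) * T (T^[m] y) = 2^m * (2 * T (T^[m] y)) := by ring
        _ = 2^m * T^[m] y := by rw [e]
      have l2 : 2^m ≤ 2^(m - sm m y) * 3^(sm m y) := by
        calc 2^m = 2^(m - sm m y) * 2^(sm m y) := by rw [← pow_add]; congr 1; omega
        _ ≤ 2^(m - sm m y) * 3^(sm m y) :=
            Nat.mul_le_mul_left _ (Nat.pow_le_pow_left (by norm_num) _)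
      rw [hsub, pow_succ 2 m]
      calc 2^(m+1) * T (T^[m] y) + 2^m * 2 = (2^m * T^[m] y + 2^m) + 2^m := by rw [l1]; ring
      _ ≤ (3^(sm m y) * y + 2^(m - sm m y) * 3^(sm m y)) + 2^(m - sm m y) * 3^(sm m y) := by
          have := ih; omega
      _ = 3^(sm m y) * y + 2^(m - sm m y) * 3^(sm m y) * 2 := by ring
      _ = 3^(sm m y) * y + 2^(m - sm m y) * 2 * 3^(sm m y) := by ring
      _ = 3^(sm m y) * y + (2^(m - sm m y) * 2^1) * 3^(sm m y) := by norm_num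
      _ = 3^(sm m y) * y + 2^(m - sm m y + 1) * 3^(sm m y) := by rw [← pow_add]
    · have hX : X m y = 1 := h
      rw [Function.iterate_succ_apply', hsm, hX]
      have e : 2 * T (T^[m] y) = 3 * T^[m] y + 1 := two_T_odd h
      have hsub2 : m + 1 - (sm m y + 1) = m - sm m y := by omega
      rw [hsub2]
      have l1 : 2^(m+1) * T (T^[m] y) + 2^(m+1) = 3 * (2^m * T^[m] y + 2^m) := by
        calc 2^(m+1) * T (T^[m] y) + 2^(m+1) = 2^m * (2 * T (T^[m] y)) + 2^(m+1) := by ring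
        _ = 2^m * (3 * T^[m] y + 1) + 2^(m+1) := by rw [e]
        _ = 3 * (2^m * T^[m] y + 2^m) := by ring
      calc 2^(m+1) * T (T^[m] y) + 2^(m+1) = 3 * (2^m * T^[m] y + 2^m) := l1
      _ ≤ 3 * (3^(sm m y) * y + 2^(m - sm m y) * 3^(sm m y)) := Nat.mul_le_mul_left 3 ih
      _ = 3^(sm m y + 1) * y + 2^(m - sm m y) * 3^(sm m y + 1) := by ring

lemma key_s16 (c : ℝ) (j y : ℕ) (hy : 1 ≤ y) (hs : sm (5*j) y ≤ 3*j)
    (hj : ((27:ℝ)/32)^j < c/2) (hY : ((3:ℝ)/2)^(3*j) * 2 ≤ c * y) :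
    (T^[5*j] y : ℝ) < c * y := by
  set m := 5*j with hm
  set s := sm m y with hσ
  have hsm : s ≤ m := sm_le m y
  have h2m : (0:ℝ) < 2^m := by positivity
  have h2s : (0:ℝ) < 2^s := by positivity
  have hyR : (1:ℝ) ≤ (y:ℝ) := by exact_mod_cast hy
  -- cast growth
  have g0 := growth_s16 m y
  rw [← hσ] at g0
  have g : (2:ℝ)^m * T^[m] y ≤ 3^s * y + 2^(m-s) * 3^s := by
    have g1 : 2^m * T^[m] y ≤ 3^s * y + 2^(m-s) * 3^s := le_trans (Nat.le_add_right _ _) g0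
    have : ((2^m * T^[m] y : ℕ) : ℝ) ≤ ((3^s * y + 2^(m-s) * 3^s : ℕ) : ℝ) := by
      exact_mod_cast g1
    push_cast at this
    linarith
  have hpow : (2:ℝ)^(m-s) * 2^s = 2^m := by
    rw [← pow_add]; congr 1; omega
  -- T^[m] y ≤ 3^s*y/2^m + (3/2)^s
  have g2 : (T^[m] y : ℝ) ≤ 3^s * y / 2^m + (3:ℝ)^s / 2^s := by
    rw [div_add_div _ _ (ne_of_gt h2m) (ne_of_gt h2s), le_div_iff₀ (by positivity)]
    calc (T^[m] y : ℝ) * (2^m * 2^s) = (2^m * T^[m] y) * 2^s := by ring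
    _ ≤ (3^s * y + 2^(m-s) * 3^s) * 2^s := by nlinarith [g, h2s]
    _ = 3^s * y * 2^s + (2^(m-s) * 2^s) * 3^s := by ring
    _ = 3 ^ s * ↑y * 2 ^ s + 2 ^ m * 3 ^ s := by rw [hpow]
  have e1 : (3:ℝ)^s * y / 2^m < c/2 * y := by
    rw [div_lt_iff₀ h2m]
    have h32 : (2:ℝ)^m = 32^j := by
      rw [hm, show (32:ℝ) = 2^5 by norm_num, ← pow_mul]
    have h27 : (3:ℝ)^s ≤ 27^j := by
      calc (3:ℝ)^s ≤ 3^(3*j) := by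
            apply pow_le_pow_right₀ (by norm_num) hs
      _ = 27^j := by rw [show (27:ℝ) = 3^3 by norm_num, ← pow_mul]
    have hj' : (27:ℝ)^j < c/2 * 32^j := by
      have h32p : (0:ℝ) < 32^j := by positivity
      have := (div_lt_iff₀ h32p).mp (by rwa [div_pow] at hj)
      linarith
    calc (3:ℝ)^s * y ≤ 27^j * y := by nlinarith
    _ < (c/2 * 32^j) * y := by nlinarith
    _ = c/2 * y * 2^m := by rw [h32]; ring
  have e2 : (3:ℝ)^s / 2^s ≤ c/2 * y := by
    calc (3:ℝ)^s / 2^s = (3/2:ℝ)^s := by rw [div_pow]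
    _ ≤ (3/2:ℝ)^(3*j) := by apply pow_le_pow_right₀ (by norm_num) hs
    _ ≤ c/2 * y := by linarith
  linarith


set_option maxHeartbeats 1000000 in
theorem stmt16 (c : ℝ) (hc : 0 < c) :
    DensityOne {y : ℕ | ∃ k : ℕ, (T^[k] y : ℝ) < c * y} := by
  classical
  set A := {y : ℕ | ∃ k : ℕ, (T^[k] y : ℝ) < c * y} with hA
  rw [DensityOne, Metric.tendsto_atTop]
  intro ε hε
  have t1 : Tendsto (fun j : ℕ => ((27:ℝ)/32)^j) atTop (nhds 0) :=
    tendsto_pow_atTop_nhds_zero_of_lt_one (by norm_num) (by norm_num)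
  have t2 : Tendsto (fun j : ℕ => ((243:ℝ)/256)^j) atTop (nhds 0) :=
    tendsto_pow_atTop_nhds_zero_of_lt_one (by norm_num) (by norm_num)
  obtain ⟨j, hj1, hj2⟩ := ((t1.eventually_lt_const (by linarith : (0:ℝ) < c/2)).and
    (t2.eventually_lt_const (by linarith : (0:ℝ) < ε/4))).exists
  set m := 5*j with hm
  set P := 2^m with hP
  have hPpos : 0 < P := Nat.pow_pos (by norm_num)
  set bad := (Finset.range P).filter (fun r => 3*j < sm m r) with hbad
  set B := bad.card with hB
  have hBbound : B * 2^(3*j+1) ≤ 3^m := badres_count m (3*j)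
  obtain ⟨Y0, hY0⟩ := exists_nat_gt (((3:ℝ)/2)^(3*j) * 2 / c)
  set Y := Y0 + 1 with hY
  -- B/P bound
  have hPR : (0:ℝ) < (P:ℝ) := by exact_mod_cast hPpos
  have hBP : (B:ℝ)/P < ε/4 := by
    have hnat : B * 256^j ≤ 243^j * P := by
      have e8 : (256:ℕ)^j = 2^(8*j) := by
        rw [show (256:ℕ) = 2^8 by norm_num, ← pow_mul]
      have e3 : (243:ℕ)^j = 3^(5*j) := by
        rw [show (243:ℕ) = 3^5 by norm_num, ← pow_mul]
      have e : 2^(8*j) ≤ 2^(3*j+1)*2^(5*j) := by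
        rw [← pow_add]; exact Nat.pow_le_pow_right (by norm_num) (by omega)
      calc B * 256^j = B * 2^(8*j) := by rw [e8]
      _ ≤ B * (2^(3*j+1)*2^(5*j)) := Nat.mul_le_mul_left _ e
      _ = (B*2^(3*j+1))*2^(5*j) := by ring
      _ ≤ 3^(5*j)*2^(5*j) := Nat.mul_le_mul_right _ hBbound
      _ = 243^j * P := by rw [e3]
    have h256 : (0:ℝ) < (256:ℝ)^j := by positivity
    have : (B:ℝ)/P ≤ (243:ℝ)^j/256^j := by
      rw [div_le_div_iff₀ hPR h256]
      exact_mod_cast hnat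
    calc (B:ℝ)/P ≤ (243:ℝ)^j/256^j := this
    _ = ((243:ℝ)/256)^j := by rw [div_pow]
    _ < ε/4 := hj2
  obtain ⟨N0, hN0⟩ := exists_nat_gt (((Y:ℝ) + B + 1) * 4 / ε)
  refine ⟨max N0 1, fun n hn => ?_⟩
  have hn1 : 1 ≤ n := le_trans (le_max_right _ _) hn
  have hnR : (0:ℝ) < (n:ℝ) := by exact_mod_cast hn1
  have hnN : ((Y:ℝ) + B + 1) * 4 / ε < n := by
    calc ((Y:ℝ) + B + 1) * 4 / ε < N0 := hN0
    _ ≤ n := by exact_mod_cast le_trans (le_max_left _ _) hn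
  have hYB : ((Y:ℝ) + B + 1) * 4 < n * ε := by
    rw [div_lt_iff₀ hε] at hnN; linarith
  set G := (Finset.Iic n).filter (fun y => Y ≤ y ∧ sm m y ≤ 3*j) with hG
  -- G lands in A ∩ Iic n
  have hGsub : ↑G ⊆ A ∩ Set.Iic n := by
    intro y hy
    rw [hG, Finset.coe_filter] at hy
    obtain ⟨hyn, hyY, hys⟩ := hy
    rw [Finset.mem_Iic] at hyn
    have hy1 : 1 ≤ y := by omega
    have hYc : ((3:ℝ)/2)^(3*j) * 2 ≤ c * y := by
      rw [div_lt_iff₀ hc] at hY0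
      have : (Y0:ℝ) ≤ (y:ℝ) := by exact_mod_cast by omega
      nlinarith
    exact ⟨⟨5*j, key_s16 c j y hy1 hys hj1 hYc⟩, hyn⟩
  have hfin : (A ∩ Set.Iic n).Finite := (Set.finite_Iic n).subset Set.inter_subset_right
  have hG1 : (G.card : ℝ) ≤ ((A ∩ Set.Iic n).ncard : ℝ) := by
    have := Set.ncard_le_ncard hGsub hfin
    rw [Set.ncard_coe_finset] at this
    exact_mod_cast this
  -- counting
  have hc1 : ((Finset.Iic n).filter (fun y => y < Y)).card ≤ Y := by
    calc ((Finset.Iic n).filter (fun y => y < Y)).card ≤ (Finset.range Y).card :=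
      Finset.card_le_card (fun y hy => Finset.mem_range.mpr (Finset.mem_filter.mp hy).2)
    _ = Y := Finset.card_range Y
  have hc2 : ((Finset.Iic n).filter (fun y => 3*j < sm m y)).card ≤ B * (n/P + 1) := by
    have := Finset.card_le_card_of_injOn
      (s := (Finset.Iic n).filter (fun y => 3*j < sm m y))
      (t := bad ×ˢ Finset.range (n/P + 1)) (fun y => (y % P, y / P)) ?_ ?_
    · rwa [Finset.card_product, Finset.card_range] at this
    · intro y hy
      rw [Finset.mem_coe] at hy ⊢
      rw [Finset.mem_filter, Finset.mem_Iic] at hy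
      rw [Finset.mem_product, Finset.mem_range]
      constructor
      · rw [hbad, Finset.mem_filter, Finset.mem_range]
        exact ⟨Nat.mod_lt _ hPpos, by rw [sm_mod]; exact hy.2⟩
      · exact Nat.lt_succ_of_le (Nat.div_le_div_right hy.1)
    · intro a _ b _ hab
      simp only [Prod.mk.injEq] at hab
      calc a = a % P + P * (a / P) := (Nat.mod_add_div a P).symm
      _ = b % P + P * (b / P) := by rw [hab.1, hab.2]
      _ = b := Nat.mod_add_div b P
  have hsplit : Finset.Iic n ⊆ G ∪ (Finset.Iic n).filter (fun y => y < Y)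
      ∪ (Finset.Iic n).filter (fun y => 3*j < sm m y) := by
    intro y hy
    simp only [Finset.mem_union, hG, Finset.mem_filter, hy, true_and]
    omega
  have hcount : n + 1 ≤ G.card + Y + B * (n/P + 1) := by
    calc n + 1 = (Finset.Iic n).card := (Nat.card_Iic n).symm
    _ ≤ (G ∪ (Finset.Iic n).filter (fun y => y < Y)
        ∪ (Finset.Iic n).filter (fun y => 3*j < sm m y)).card := Finset.card_le_card hsplit
    _ ≤ (G ∪ (Finset.Iic n).filter (fun y => y < Y)).card
        + ((Finset.Iic n).filter (fun y => 3*j < sm m y)).card := Finset.card_union_le _ _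
    _ ≤ G.card + ((Finset.Iic n).filter (fun y => y < Y)).card
        + ((Finset.Iic n).filter (fun y => 3*j < sm m y)).card := by
        have := Finset.card_union_le G ((Finset.Iic n).filter (fun y => y < Y))
        omega
    _ ≤ G.card + Y + B * (n/P + 1) := by omega
  -- real estimates
  have hup : ((A ∩ Set.Iic n).ncard : ℝ) ≤ (n:ℝ) + 1 := by
    have h1 : (A ∩ Set.Iic n).ncard ≤ (Set.Iic n).ncard :=
      Set.ncard_le_ncard Set.inter_subset_right (Set.finite_Iic n)
    have h2 : (Set.Iic n).ncard = n + 1 := by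
      rw [← Finset.coe_Iic, Set.ncard_coe_finset, Nat.card_Iic]
    rw [h2] at h1
    exact_mod_cast h1
  have hdivle : ((n/P : ℕ) : ℝ) ≤ (n:ℝ)/(P:ℝ) := Nat.cast_div_le
  have hlow : (n:ℝ) + 1 ≤ ((A ∩ Set.Iic n).ncard : ℝ) + Y + B * ((n:ℝ)/P + 1) := by
    have hcR : (n:ℝ) + 1 ≤ (G.card : ℝ) + Y + B * (((n/P : ℕ):ℝ) + 1) := by
      exact_mod_cast hcount
    have hBpos : (0:ℝ) ≤ (B:ℝ) := Nat.cast_nonneg B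
    nlinarith [hG1, hdivle]
  clear_value A m P bad B Y G
  rw [Real.dist_eq, abs_lt]
  have hBPn : (B:ℝ) * ((n:ℝ)/P) < ε/4 * n := by
    have : (B:ℝ)/P * n < ε/4 * n := by nlinarith
    calc (B:ℝ) * ((n:ℝ)/P) = (B:ℝ)/P * n := by ring
    _ < ε/4 * n := this
  have hY1 : (1:ℝ) ≤ (Y:ℝ) := by rw [hY]; exact_mod_cast Nat.succ_le_succ (Nat.zero_le Y0)
  have hexp : (B:ℝ) * ((n:ℝ)/P + 1) = B*((n:ℝ)/P) + B := by ring
  have hB0 : (0:ℝ) ≤ (B:ℝ) := Nat.cast_nonneg B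
  constructor
  · have k1 : (1-ε)*(n:ℝ) < ((A ∩ Set.Iic n).ncard : ℝ) := by
      have expand : (1-ε)*(n:ℝ) = n - ε*n := by ring
      rw [expand]
      linarith [hlow, hexp, hBPn, hYB, hY1]
    have := (lt_div_iff₀ hnR).mpr k1
    linarith
  · have k2 : ((A ∩ Set.Iic n).ncard : ℝ) < (1+ε)*(n:ℝ) := by
      have expand : (1+ε)*(n:ℝ) = n + ε*n := by ring
      rw [expand]
      linarith [hup, hYB, hY1, hB0]
    have := (div_lt_iff₀ hnR).mpr k2
    linarith
end
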